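/- Fix s > 1/2. There exists a constant C > 0 such that for every measurable function F : ℝ² → ℂ, ∫_ℝ ( ∫_ℝ |F(ξ,β)| dβ )² dξ ≤ C ∫_{ℝ²} ⟨ξ² + |ξβ − ξ⁶|⟩^{s} (|ξβ − ξ⁶|^{1/2} / |ξ|) |F(ξ,β)|² dξ dβ. (This is the key estimate in the trace lemma showing that ℋ^s_{x,t} embeds continuously into C⁰_t L²_x for s > 1/2.) -/

import Mathlib

open MeasureTheory Set
open scoped ENNReal

/-- Japanese bracket `⟨x⟩ = (1 + x²)^{1/2}`. -/
noncomputable def jap (x : ℝ) : ℝ := Real.sqrt (1 + x ^ 2)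

lemma jap_pos (x : ℝ) : 0 < jap x := Real.sqrt_pos.2 (by positivity)

lemma one_le_jap (x : ℝ) : 1 ≤ jap x := by
  have h : (1:ℝ) = Real.sqrt 1 := by simp
  rw [h, jap]
  exact Real.sqrt_le_sqrt (by nlinarith [sq_nonneg x])

lemma jap_mono {a b : ℝ} (ha : 0 ≤ a) (h : a ≤ b) : jap a ≤ jap b :=
  Real.sqrt_le_sqrt (by nlinarith)

lemma measurable_jap : Measurable jap := by unfold jap; fun_prop

/-- Affine change of variables for the Lebesgue integral on `ℝ`. -/
lemma lintegral_comp_mul_add (g : ℝ → ℝ≥0∞) (hg : Measurable g) {a : ℝ} (ha : a ≠ 0) (b : ℝ) :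
    ∫⁻ x : ℝ, g (a * x + b) = ENNReal.ofReal |a|⁻¹ * ∫⁻ u : ℝ, g u := by
  have h1 : ∫⁻ x : ℝ, g (a * x + b)
      = ∫⁻ y : ℝ, g (y + b) ∂(Measure.map (fun x : ℝ => a * x) volume) :=
    (lintegral_map (hg.comp (measurable_add_const b)) (measurable_const_mul a)).symm
  rw [h1, Real.map_volume_mul_left ha, lintegral_smul_measure,
    lintegral_add_right_eq_self (fun u => g u) b, abs_inv, smul_eq_mul]

lemma lintegral_aux_lt_top (s : ℝ) (hs : 1/2 < s) :
    (∫⁻ u : ℝ, ENNReal.ofReal (jap |u| ^ (-s) * |u| ^ (-(1/2) : ℝ))) < ⊤ := by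
  set G : ℝ → ℝ≥0∞ := fun u => ENNReal.ofReal (jap |u| ^ (-s) * |u| ^ (-(1/2) : ℝ)) with hG
  have hGm : Measurable G := by
    rw [hG]; unfold jap; fun_prop
  have hG0 : G 0 = 0 := by
    simp [hG, Real.zero_rpow (by norm_num : (-(1/2):ℝ) ≠ 0)]
  have hGeven : ∀ u, G (-u) = G u := fun u => by simp [hG]
  -- finiteness on (0, 1]
  have h1 : ∫⁻ u in Ioc (0:ℝ) 1, G u < ⊤ := by
    have hint : IntegrableOn (fun u : ℝ => u ^ (-(1/2):ℝ)) (Ioc 0 1) volume :=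
      (intervalIntegral.intervalIntegrable_rpow' (by norm_num)).1
    refine lt_of_le_of_lt ?_ hint.lintegral_lt_top
    refine setLIntegral_mono (by fun_prop) fun u hu => ?_
    rw [hG]
    have h2 : jap |u| ^ (-s) ≤ 1 :=
      Real.rpow_le_one_of_one_le_of_nonpos (one_le_jap _) (by linarith)
    refine ENNReal.ofReal_le_ofReal ?_
    rw [abs_of_pos hu.1]
    calc jap u ^ (-s) * u ^ (-(1/2):ℝ) ≤ 1 * u ^ (-(1/2):ℝ) := by
          refine mul_le_mul_of_nonneg_right ?_ (Real.rpow_nonneg hu.1.le _)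
          rw [← abs_of_pos hu.1]; exact h2
      _ = u ^ (-(1/2):ℝ) := one_mul _
  -- finiteness on (1, ∞)
  have h2 : ∫⁻ u in Ioi (1:ℝ), G u < ⊤ := by
    have hint : IntegrableOn (fun u : ℝ => u ^ (-s + -(1/2) : ℝ)) (Ioi 1) volume :=
      integrableOn_Ioi_rpow_of_lt (by linarith) one_pos
    refine lt_of_le_of_lt ?_ hint.lintegral_lt_top
    refine setLIntegral_mono (by fun_prop) fun u hu => ?_
    have hu1 : (1:ℝ) < u := hu
    have hu0 : (0:ℝ) < u := by linarith
    rw [hG]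
    refine ENNReal.ofReal_le_ofReal ?_
    rw [abs_of_pos hu0]
    have hju : u ≤ jap u := by
      rw [jap]
      calc u = Real.sqrt (u^2) := by rw [Real.sqrt_sq hu0.le]
        _ ≤ _ := Real.sqrt_le_sqrt (by nlinarith)
    have h3 : jap u ^ (-s) ≤ u ^ (-s) :=
      Real.rpow_le_rpow_of_nonpos hu0 hju (by linarith)
    calc jap u ^ (-s) * u ^ (-(1/2):ℝ) ≤ u ^ (-s) * u ^ (-(1/2):ℝ) :=
        mul_le_mul_of_nonneg_right h3 (Real.rpow_nonneg hu0.le _)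
      _ = u ^ (-s + -(1/2) : ℝ) := (Real.rpow_add hu0 _ _).symm
  -- finiteness on (0, ∞)
  have hIoi : ∫⁻ u in Ioi (0:ℝ), G u < ⊤ := by
    have hsub : ∫⁻ u in Ioi (0:ℝ), G u ≤ ∫⁻ u in Ioc (0:ℝ) 1 ∪ Ioi 1, G u := by
      refine lintegral_mono_set fun x hx => ?_
      rcases le_or_gt x 1 with h | h
      · exact Or.inl ⟨hx, h⟩
      · exact Or.inr h
    exact lt_of_le_of_lt (hsub.trans (lintegral_union_le _ _ _)) (ENNReal.add_lt_top.2 ⟨h1, h2⟩)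
  -- reflection : integral over (-∞,0) equals integral over (0,∞)
  have hrefl : ∫⁻ u in Iio (0:ℝ), G u = ∫⁻ u in Ioi (0:ℝ), G u := by
    rw [← lintegral_indicator measurableSet_Iio G, ← lintegral_indicator measurableSet_Ioi G]
    have hpt : ∀ x : ℝ, (Iio (0:ℝ)).indicator G x = (Ioi (0:ℝ)).indicator G ((-1) * x + 0) := by
      intro x
      have hx' : (-1 : ℝ) * x + 0 = -x := by ring
      rw [hx']
      by_cases hx : x < 0
      · simp [Set.indicator_apply, Set.mem_Iio, Set.mem_Ioi, hx, neg_pos, hGeven]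
      · simp [Set.indicator_apply, Set.mem_Iio, Set.mem_Ioi, hx, neg_pos]
    rw [lintegral_congr hpt,
      lintegral_comp_mul_add _ (hGm.indicator measurableSet_Ioi) (by norm_num) 0]
    norm_num
  have hIci : ∫⁻ u in Ici (0:ℝ), G u = ∫⁻ u in Ioi (0:ℝ), G u := by
    rw [← lintegral_indicator measurableSet_Ici G, ← lintegral_indicator measurableSet_Ioi G]
    refine lintegral_congr fun x => ?_
    rcases eq_or_ne x 0 with rfl | hx
    · simp [hG0]
    · have hiff : (0 ≤ x) ↔ (0 < x) := ⟨fun h' => lt_of_le_of_ne h' (Ne.symm hx), le_of_lt⟩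
      simp [Set.indicator_apply, Set.mem_Ici, Set.mem_Ioi, hiff]
  have hcc := lintegral_add_compl (μ := volume) G (measurableSet_Iio (a := (0:ℝ)))
  rw [compl_Iio, hrefl, hIci] at hcc
  rw [← hcc]
  exact ENNReal.add_lt_top.2 ⟨hIoi, hIoi⟩

/-- For `s > 1/2`,
`∫_ℝ (∫_ℝ |F(ξ,β)| dβ)² dξ ≤ C ∫_{ℝ²} ⟨ξ² + |ξβ − ξ⁶|⟩^s (|ξβ − ξ⁶|^{1/2}/|ξ|) |F(ξ,β)|² dξ dβ`,
the key estimate in the trace lemma `ℋ^s_{x,t} ↪ C⁰_t L²_x`. -/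
theorem stmt4 (s : ℝ) (hs : 1/2 < s) :
    ∃ C > (0:ℝ), ∀ F : ℝ × ℝ → ℂ, Measurable F →
      ∫⁻ ξ : ℝ, (∫⁻ β : ℝ, ENNReal.ofReal ‖F (ξ, β)‖) ^ 2 ≤
        ENNReal.ofReal C *
          ∫⁻ p : ℝ × ℝ, ENNReal.ofReal
            (jap (p.1 ^ 2 + |p.1 * p.2 - p.1 ^ 6|) ^ s *
              (|p.1 * p.2 - p.1 ^ 6| ^ ((1:ℝ)/2) / |p.1|) * ‖F p‖ ^ 2) := by
  set K : ℝ≥0∞ := ∫⁻ u : ℝ, ENNReal.ofReal (jap |u| ^ (-s) * |u| ^ (-(1/2) : ℝ)) with hK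
  have hKlt : K < ⊤ := lintegral_aux_lt_top s hs
  refine ⟨K.toReal + 1, by positivity, ?_⟩
  intro F hF
  set w : ℝ × ℝ → ℝ := fun p => jap (p.1 ^ 2 + |p.1 * p.2 - p.1 ^ 6|) ^ s *
      (|p.1 * p.2 - p.1 ^ 6| ^ ((1:ℝ)/2) / |p.1|) with hw
  have hwm : Measurable w := by rw [hw]; unfold jap; fun_prop
  have hwnn : ∀ p, 0 ≤ w p := fun p =>
    mul_nonneg (Real.rpow_nonneg (jap_pos _).le _)
      (div_nonneg (Real.rpow_nonneg (abs_nonneg _) _) (abs_nonneg _))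
  have hs0 : (0:ℝ) ≤ s := by linarith
  -- the auxiliary function for the change of variables
  set h : ℝ → ℝ≥0∞ := fun u => ENNReal.ofReal (jap |u| ^ (-s) * |u| ^ (-(1/2) : ℝ)) with hh
  have hhm : Measurable h := by rw [hh]; unfold jap; fun_prop
  -- key pointwise-in-ξ estimate
  have key : ∀ ξ : ℝ, ξ ≠ 0 →
      (∫⁻ β : ℝ, ENNReal.ofReal ‖F (ξ, β)‖) ^ 2 ≤
        K * ∫⁻ β : ℝ, ENNReal.ofReal (w (ξ, β) * ‖F (ξ, β)‖ ^ 2) := by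
    intro ξ hξ
    have hae : ∀ᵐ β : ℝ, ξ * β - ξ ^ 6 ≠ 0 := by
      rw [ae_iff]
      have hset : {β : ℝ | ¬ ξ * β - ξ ^ 6 ≠ 0} = {ξ ^ 5} := by
        ext β
        simp only [mem_setOf_eq, not_not, mem_singleton_iff, sub_eq_zero]
        constructor
        · intro hb
          have h6 : ξ ^ 6 = ξ * ξ ^ 5 := by ring
          exact mul_left_cancel₀ hξ (by rw [hb, ← h6])
        · rintro rfl; ring
      rw [hset]
      exact measure_singleton _
    have hwpos : ∀ β : ℝ, ξ * β - ξ ^ 6 ≠ 0 → 0 < w (ξ, β) := by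
      intro β hu
      have h1 : 0 < jap ((ξ:ℝ)^2 + |ξ*β - ξ^6|) ^ s := Real.rpow_pos_of_pos (jap_pos _) _
      have h2 : 0 < |ξ*β - ξ^6| ^ ((1:ℝ)/2) := Real.rpow_pos_of_pos (abs_pos.2 hu) _
      exact mul_pos h1 (div_pos h2 (abs_pos.2 hξ))
    -- Cauchy–Schwarz
    set f : ℝ → ℝ≥0∞ := fun β => ENNReal.ofReal (w (ξ, β)) ^ (-(1/2) : ℝ) with hf
    set g : ℝ → ℝ≥0∞ := fun β => ENNReal.ofReal (w (ξ, β) * ‖F (ξ, β)‖ ^ 2) ^ ((1/2) : ℝ) with hg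
    have hfm : Measurable f := by
      rw [hf]
      exact ((ENNReal.measurable_ofReal.comp
        (hwm.comp (measurable_const.prodMk measurable_id)))).pow_const _
    have hgm : Measurable g := by
      rw [hg]
      have hFb : Measurable fun β : ℝ => F (ξ, β) :=
        hF.comp (measurable_const.prodMk measurable_id)
      exact (ENNReal.measurable_ofReal.comp
        ((hwm.comp (measurable_const.prodMk measurable_id)).mul
          ((hFb.norm).pow_const 2))).pow_const _
    have hpt : ∀ᵐ β : ℝ, ENNReal.ofReal ‖F (ξ, β)‖ = f β * g β := by
      filter_upwards [hae] with β hu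
      have hwp := hwpos β hu
      have hw0 : ENNReal.ofReal (w (ξ, β)) ≠ 0 := by
        simp only [ne_eq, ENNReal.ofReal_eq_zero, not_le]; exact hwp
      have hwt : ENNReal.ofReal (w (ξ, β)) ≠ ⊤ := ENNReal.ofReal_ne_top
      simp only [hf, hg]
      rw [ENNReal.ofReal_mul (hwnn _),
        ENNReal.mul_rpow_of_nonneg _ _ (by norm_num : (0:ℝ) ≤ 1/2), ← mul_assoc,
        ← ENNReal.rpow_add _ _ hw0 hwt]
      rw [show (-(1/2) + 1/2 : ℝ) = 0 by norm_num, ENNReal.rpow_zero, one_mul,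
        show (‖F (ξ,β)‖^2 : ℝ) = ‖F (ξ,β)‖ ^ (2:ℕ) from rfl,
        ENNReal.ofReal_pow (norm_nonneg _), ← ENNReal.rpow_natCast, ← ENNReal.rpow_mul,
        show ((2:ℕ):ℝ) * (1/2) = 1 by norm_num, ENNReal.rpow_one]
    have hCS : (∫⁻ β : ℝ, ENNReal.ofReal ‖F (ξ, β)‖) ≤
        (∫⁻ β, f β ^ (2:ℝ)) ^ ((1:ℝ)/2) * (∫⁻ β, g β ^ (2:ℝ)) ^ ((1:ℝ)/2) := by
      calc (∫⁻ β : ℝ, ENNReal.ofReal ‖F (ξ, β)‖) = ∫⁻ β, (f * g) β :=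
            lintegral_congr_ae hpt
        _ ≤ _ := ENNReal.lintegral_mul_le_Lp_mul_Lq volume
            ⟨by norm_num, by norm_num, by norm_num⟩ hfm.aemeasurable hgm.aemeasurable
    have hf2 : ∀ β, f β ^ (2:ℝ) = (ENNReal.ofReal (w (ξ, β)))⁻¹ := by
      intro β
      simp only [hf]
      rw [← ENNReal.rpow_mul, show (-(1/2) * 2 : ℝ) = -1 by norm_num, ENNReal.rpow_neg_one]
    have hg2 : ∀ β, g β ^ (2:ℝ) = ENNReal.ofReal (w (ξ, β) * ‖F (ξ, β)‖ ^ 2) := by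
      intro β
      simp only [hg]
      rw [← ENNReal.rpow_mul, show ((1/2) * 2 : ℝ) = 1 by norm_num, ENNReal.rpow_one]
    -- the weight integral is bounded by K
    have hB2 : (∫⁻ β : ℝ, (ENNReal.ofReal (w (ξ, β)))⁻¹) ≤ K := by
      have hreal : ∀ β : ℝ, ξ * β - ξ ^ 6 ≠ 0 →
          (w (ξ, β))⁻¹ ≤ |ξ| * (jap |ξ * β - ξ ^ 6| ^ (-s) * |ξ * β - ξ ^ 6| ^ (-(1/2) : ℝ)) := by
        intro β hu
        set u : ℝ := ξ * β - ξ ^ 6 with hudef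
        have hA : 0 < |u| ^ ((1:ℝ)/2) := Real.rpow_pos_of_pos (abs_pos.2 hu) _
        have hxi : 0 < |ξ| := abs_pos.2 hξ
        have hJ2 : 0 < jap |u| ^ s := Real.rpow_pos_of_pos (jap_pos _) _
        have hJ1 : 0 < jap (ξ^2 + |u|) ^ s := Real.rpow_pos_of_pos (jap_pos _) _
        have hJle : jap |u| ^ s ≤ jap (ξ^2 + |u|) ^ s :=
          Real.rpow_le_rpow (jap_pos _).le
            (jap_mono (abs_nonneg u) (by nlinarith [sq_nonneg ξ])) hs0
        have hLHS : (w (ξ, β))⁻¹ = |ξ| * ((jap (ξ^2 + |u|) ^ s)⁻¹ * (|u| ^ ((1:ℝ)/2))⁻¹) := by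
          rw [hw]
          show (jap (ξ^2 + |u|) ^ s * (|u| ^ ((1:ℝ)/2) / |ξ|))⁻¹ = _
          rw [mul_inv, inv_div]; ring
        rw [hLHS, Real.rpow_neg (jap_pos _).le,
          show (-(1/2) : ℝ) = -((1:ℝ)/2) by norm_num, Real.rpow_neg (abs_nonneg u)]
        refine mul_le_mul_of_nonneg_left ?_ hxi.le
        exact mul_le_mul_of_nonneg_right (inv_anti₀ hJ2 hJle) (inv_nonneg.2 hA.le)
      calc (∫⁻ β : ℝ, (ENNReal.ofReal (w (ξ, β)))⁻¹)
          ≤ ∫⁻ β : ℝ, ENNReal.ofReal |ξ| * h (ξ * β + -(ξ^6)) := by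
            refine lintegral_mono_ae ?_
            filter_upwards [hae] with β hu
            rw [← ENNReal.ofReal_inv_of_pos (hwpos β hu)]
            refine le_trans (ENNReal.ofReal_le_ofReal (hreal β hu)) ?_
            rw [ENNReal.ofReal_mul (abs_nonneg ξ), hh]
            simp only [← sub_eq_add_neg]
            exact le_rfl
        _ = ENNReal.ofReal |ξ| * ∫⁻ β : ℝ, h (ξ * β + -(ξ^6)) :=
            lintegral_const_mul _ (hhm.comp (by fun_prop))
        _ = ENNReal.ofReal |ξ| * (ENNReal.ofReal |ξ|⁻¹ * K) := by
            rw [lintegral_comp_mul_add h hhm hξ, hK]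
        _ = K := by
            rw [← mul_assoc, ← ENNReal.ofReal_mul (abs_nonneg ξ),
              mul_inv_cancel₀ (abs_ne_zero.2 hξ), ENNReal.ofReal_one, one_mul]
    have hsq : ∀ x : ℝ≥0∞, (x ^ ((1:ℝ)/2)) ^ (2:ℕ) = x := by
      intro x
      rw [← ENNReal.rpow_natCast (x ^ ((1:ℝ)/2)) 2, ← ENNReal.rpow_mul]
      norm_num
    calc (∫⁻ β : ℝ, ENNReal.ofReal ‖F (ξ, β)‖) ^ 2
        ≤ ((∫⁻ β, f β ^ (2:ℝ)) ^ ((1:ℝ)/2) * (∫⁻ β, g β ^ (2:ℝ)) ^ ((1:ℝ)/2)) ^ 2 :=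
          pow_le_pow_left' hCS 2
      _ = (∫⁻ β, f β ^ (2:ℝ)) * (∫⁻ β, g β ^ (2:ℝ)) := by
          rw [mul_pow, hsq, hsq]
      _ = (∫⁻ β : ℝ, (ENNReal.ofReal (w (ξ, β)))⁻¹) *
            ∫⁻ β : ℝ, ENNReal.ofReal (w (ξ, β) * ‖F (ξ, β)‖ ^ 2) := by
          rw [lintegral_congr hf2, lintegral_congr hg2]
      _ ≤ K * ∫⁻ β : ℝ, ENNReal.ofReal (w (ξ, β) * ‖F (ξ, β)‖ ^ 2) :=
          mul_le_mul_left hB2 _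
  -- assemble
  have h0 : ∀ᵐ ξ : ℝ, ξ ≠ 0 := by
    rw [ae_iff]
    have : {ξ : ℝ | ¬ ξ ≠ 0} = {0} := by ext ξ; simp
    rw [this]
    exact measure_singleton _
  have hinner : Measurable fun ξ : ℝ => ∫⁻ β : ℝ, ENNReal.ofReal (w (ξ, β) * ‖F (ξ, β)‖ ^ 2) := by
    apply Measurable.lintegral_prod_right' (f := fun p : ℝ × ℝ => ENNReal.ofReal (w p * ‖F p‖ ^ 2))
    exact ENNReal.measurable_ofReal.comp (hwm.mul (hF.norm.pow_const 2))
  have hRHS : (∫⁻ p : ℝ × ℝ, ENNReal.ofReal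
        (jap (p.1 ^ 2 + |p.1 * p.2 - p.1 ^ 6|) ^ s *
          (|p.1 * p.2 - p.1 ^ 6| ^ ((1:ℝ)/2) / |p.1|) * ‖F p‖ ^ 2))
      = ∫⁻ ξ : ℝ, ∫⁻ β : ℝ, ENNReal.ofReal (w (ξ, β) * ‖F (ξ, β)‖ ^ 2) := by
    rw [Measure.volume_eq_prod, lintegral_prod]
    exact (ENNReal.measurable_ofReal.comp
      ((hwm.mul (hF.norm.pow_const 2)))).aemeasurable
  rw [hRHS]
  calc ∫⁻ ξ : ℝ, (∫⁻ β : ℝ, ENNReal.ofReal ‖F (ξ, β)‖) ^ 2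
      ≤ ∫⁻ ξ : ℝ, K * ∫⁻ β : ℝ, ENNReal.ofReal (w (ξ, β) * ‖F (ξ, β)‖ ^ 2) := by
        refine lintegral_mono_ae ?_
        filter_upwards [h0] with ξ hξ using key ξ hξ
    _ = K * ∫⁻ ξ : ℝ, ∫⁻ β : ℝ, ENNReal.ofReal (w (ξ, β) * ‖F (ξ, β)‖ ^ 2) :=
        lintegral_const_mul K hinner
    _ ≤ ENNReal.ofReal (K.toReal + 1) *
          ∫⁻ ξ : ℝ, ∫⁻ β : ℝ, ENNReal.ofReal (w (ξ, β) * ‖F (ξ, β)‖ ^ 2) := by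
        refine mul_le_mul_left ?_ _
        calc K = ENNReal.ofReal K.toReal := (ENNReal.ofReal_toReal hKlt.ne).symm
          _ ≤ _ := ENNReal.ofReal_le_ofReal (by linarith)
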